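/- For n ≥ 1, the generalized Veronese map Φ_n satisfies (DΦ_n(x))ᵀ DΦ_n(x) = (2(n+1)/n)|x|² I + (2(n−1)/n) x xᵀ for all x ∈ ℝ^{n+1}, where DΦ_n is the Jacobian matrix of Φ_n. -/

import Mathlib

def mdim (n : ℕ) : ℕ := n * (n + 3) / 2

noncomputable def aCoef (n : ℕ) : ℝ := Real.sqrt ((2 * n + 2) / n)

/-- The generalized Veronese map `Φ_n : ℝ^{n+1} → ℝ^{m(n)}` defined inductively. -/
noncomputable def Phi : (n : ℕ) → (Fin (n + 1) → ℝ) → Fin (mdim n) → ℝ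
  | 0, _, _ => 0
  | 1, x, i => if (i : ℕ) = 0 then 2 * x 0 * x 1 else x 0 ^ 2 - x 1 ^ 2
  | (n + 2), x, i =>
      aCoef (n + 2) *
        (if h1 : (i : ℕ) < mdim (n + 1) then
          (1 / aCoef (n + 1)) * Phi (n + 1) (fun j => x j.castSucc) ⟨i, h1⟩
        else if h2 : (i : ℕ) < mdim (n + 1) + (n + 2) then
          x ⟨(i : ℕ) - mdim (n + 1), by omega⟩ * x (Fin.last (n + 2))
        else
          (1 / ((n + 2) * aCoef (n + 2))) *
            ((∑ j : Fin (n + 2), x j.castSucc ^ 2) - (n + 2) * x (Fin.last (n + 2)) ^ 2))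

/-! ### Auxiliary material -/

lemma mdim_succ (n : ℕ) : mdim (n+1) = mdim n + (n+2) := by
  obtain ⟨k, hk⟩ : 2 ∣ n * (n+3) := by
    rcases Nat.even_or_odd n with h | h
    · exact Dvd.dvd.mul_right h.two_dvd _
    · obtain ⟨m, rfl⟩ := h
      exact Dvd.dvd.mul_left ⟨m+2, by ring⟩ _
  have h2 : (n+1) * (n+1+3) = n * (n+3) + 2*(n+2) := by ring
  unfold mdim; omega

lemma mdim_two (n : ℕ) : mdim (n+2) = mdim (n+1) + (n+2) + 1 := by
  rw [mdim_succ]; omega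

lemma sum_fin_split {a b m : ℕ} (h : m = a + b + 1) (f : Fin m → ℝ) :
    ∑ k, f k = (∑ k : Fin a, f ⟨k, by omega⟩) + (∑ t : Fin b, f ⟨a + t, by omega⟩)
      + f ⟨a + b, by omega⟩ := by
  subst h
  rw [Fin.sum_univ_castSucc, Fin.sum_univ_add]
  rfl

lemma aCoef_pos (n : ℕ) (hn : 1 ≤ n) : 0 < aCoef n := by
  apply Real.sqrt_pos.2
  apply div_pos (by positivity)
  exact_mod_cast Nat.pos_of_ne_zero (by omega)

lemma aCoef_sq (n : ℕ) (hn : 1 ≤ n) : aCoef n ^ 2 = (2 * n + 2) / n := by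
  rw [aCoef, Real.sq_sqrt]
  positivity

noncomputable def pr (m : ℕ) (i : Fin m) : (Fin m → ℝ) →L[ℝ] ℝ := ContinuousLinearMap.proj i

lemma pr_hasFDerivAt (m : ℕ) (i : Fin m) (x : Fin m → ℝ) :
    HasFDerivAt (fun y : Fin m → ℝ => y i) (pr m i) x := hasFDerivAt_apply (𝕜 := ℝ) i x

@[simp] lemma pr_apply (m : ℕ) (i : Fin m) (v : Fin m → ℝ) : pr m i v = v i := rfl

noncomputable def restr (m : ℕ) : (Fin (m+1) → ℝ) →L[ℝ] (Fin m → ℝ) :=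
  ContinuousLinearMap.pi (fun j : Fin m => ContinuousLinearMap.proj j.castSucc)

@[simp] lemma restr_apply (m : ℕ) (y : Fin (m+1) → ℝ) : restr m y = fun j => y j.castSucc := rfl

/-- The directional derivative of `Phi`. -/
noncomputable def dPhi : (n : ℕ) → (Fin (n + 1) → ℝ) → (Fin (n + 1) → ℝ) → Fin (mdim n) → ℝ
  | 0, _, _, _ => 0
  | 1, x, v, i => if (i : ℕ) = 0 then 2 * (x 0 * v 1 + x 1 * v 0) else 2 * (x 0 * v 0 - x 1 * v 1)
  | (n + 2), x, v, i =>
      if h1 : (i : ℕ) < mdim (n + 1) then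
        (aCoef (n + 2) / aCoef (n + 1)) *
          dPhi (n + 1) (fun j => x j.castSucc) (fun j => v j.castSucc) ⟨i, h1⟩
      else if h2 : (i : ℕ) < mdim (n + 1) + (n + 2) then
        aCoef (n + 2) * (v ⟨(i : ℕ) - mdim (n + 1), by omega⟩ * x (Fin.last (n + 2))
          + x ⟨(i : ℕ) - mdim (n + 1), by omega⟩ * v (Fin.last (n + 2)))
      else
        (2 / ((n : ℝ) + 2)) *
          ((∑ j : Fin (n + 2), x j.castSucc * v j.castSucc)
            - ((n : ℝ) + 2) * (x (Fin.last (n + 2)) * v (Fin.last (n + 2))))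

theorem phi_hasDeriv : ∀ (n : ℕ) (x : Fin (n+1) → ℝ) (k : Fin (mdim n)),
    ∃ D : (Fin (n+1) → ℝ) →L[ℝ] ℝ, HasFDerivAt (fun y => Phi n y k) D x ∧ ∀ v, D v = dPhi n x v k
  | 0, x, k => absurd k.isLt (by simp [mdim])
  | 1, x, k => by
    by_cases hk : (k : ℕ) = 0
    · have hfun : (fun y : Fin 2 → ℝ => Phi 1 y k) = fun y => 2 * y 0 * y 1 := by
        funext y; simp [Phi, hk]
      have hd := ((pr_hasFDerivAt 2 0 x).const_mul 2).fun_mul (pr_hasFDerivAt 2 1 x)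
      rw [← hfun] at hd
      exact ⟨_, hd, fun v => by simp [dPhi, hk]; ring⟩
    · have hfun : (fun y : Fin 2 → ℝ => Phi 1 y k) = fun y => y 0 * y 0 - y 1 * y 1 := by
        funext y; simp [Phi, hk]; ring
      have hd := ((pr_hasFDerivAt 2 0 x).fun_mul (pr_hasFDerivAt 2 0 x)).fun_sub
        ((pr_hasFDerivAt 2 1 x).fun_mul (pr_hasFDerivAt 2 1 x))
      rw [← hfun] at hd
      exact ⟨_, hd, fun v => by simp [dPhi, hk]; ring⟩
  | (n+2), x, k => by
    rcases lt_or_ge (k:ℕ) (mdim (n+1)) with h1 | h1'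
    · obtain ⟨D, hD, hDv⟩ := phi_hasDeriv (n+1) (fun j => x j.castSucc) ⟨k, h1⟩
      have hcomp : HasFDerivAt (fun y : Fin (n+3) → ℝ => Phi (n+1) (fun j => y j.castSucc) ⟨(k:ℕ), h1⟩)
          (D.comp (restr (n+2))) x :=
        by have := HasFDerivAt.comp x hD ((restr (n+2)).hasFDerivAt); exact this
      have hd := (hcomp.const_mul (1/aCoef (n+1))).const_mul (aCoef (n+2))
      have hfun : (fun y : Fin (n+3) → ℝ => Phi (n+2) y k)
          = fun y => aCoef (n+2) * ((1/aCoef (n+1)) * Phi (n+1) (fun j => y j.castSucc) ⟨(k:ℕ), h1⟩) := by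
        funext y; simp [Phi, h1]
      rw [← hfun] at hd
      refine ⟨_, hd, fun v => ?_⟩
      simp [dPhi, h1, hDv]
      ring
    · have hn1 : ¬ ((k:ℕ) < mdim (n+1)) := not_lt.2 h1'
      rcases lt_or_ge (k:ℕ) (mdim (n+1) + (n+2)) with h2 | h2'
      · have hd := ((pr_hasFDerivAt (n+3) ⟨(k:ℕ) - mdim (n+1), by omega⟩ x).fun_mul
          (pr_hasFDerivAt (n+3) (Fin.last (n+2)) x)).const_mul (aCoef (n+2))
        have hfun : (fun y : Fin (n+3) → ℝ => Phi (n+2) y k)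
            = fun y => aCoef (n+2) * (y ⟨(k:ℕ) - mdim (n+1), by omega⟩ * y (Fin.last (n+2))) := by
          funext y; simp [Phi, hn1, h2]
        rw [← hfun] at hd
        refine ⟨_, hd, fun v => ?_⟩
        simp [dPhi, hn1, h2]
        ring
      · have hn2 : ¬ ((k:ℕ) < mdim (n+1) + (n+2)) := not_lt.2 h2'
        have hA := aCoef_pos (n+2) (by omega)
        have hsum : HasFDerivAt (fun y : Fin (n+3) → ℝ => ∑ j : Fin (n+2), y j.castSucc * y j.castSucc)
            (∑ j : Fin (n+2), (x j.castSucc • pr (n+3) j.castSucc + x j.castSucc • pr (n+3) j.castSucc)) x :=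
          HasFDerivAt.fun_sum (fun j _ =>
            (pr_hasFDerivAt (n+3) j.castSucc x).fun_mul (pr_hasFDerivAt (n+3) j.castSucc x))
        have hd := ((hsum.fun_sub (((pr_hasFDerivAt (n+3) (Fin.last (n+2)) x).fun_mul
            (pr_hasFDerivAt (n+3) (Fin.last (n+2)) x)).const_mul (((n:ℝ)+2)))).const_mul
            (1/(((n:ℝ)+2) * aCoef (n+2)))).const_mul (aCoef (n+2))
        have hfun : (fun y : Fin (n+3) → ℝ => Phi (n+2) y k)
            = fun y => aCoef (n+2) * ((1/(((n:ℝ)+2) * aCoef (n+2))) *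
                ((∑ j : Fin (n+2), y j.castSucc * y j.castSucc)
                  - ((n:ℝ)+2) * (y (Fin.last (n+2)) * y (Fin.last (n+2))))) := by
          funext y; simp [Phi, hn1, hn2, pow_two]
        rw [← hfun] at hd
        refine ⟨_, hd, fun v => ?_⟩
        have hne : ((n:ℝ)+2) ≠ 0 := by positivity
        simp [dPhi, hn1, hn2, ContinuousLinearMap.sum_apply]
        have hS2 : ∑ j : Fin (n+2), (x j.castSucc * v j.castSucc + x j.castSucc * v j.castSucc)
            = 2 * ∑ j : Fin (n+2), x j.castSucc * v j.castSucc := by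
          rw [Finset.mul_sum]; exact Finset.sum_congr rfl fun _ _ => (two_mul _).symm
        rw [hS2]
        field_simp
        ring

theorem fderiv_phi (n : ℕ) (x v : Fin (n+1) → ℝ) (k : Fin (mdim n)) :
    fderiv ℝ (Phi n) x v k = dPhi n x v k := by
  have hfam : ∀ k : Fin (mdim n), ∃ D : (Fin (n+1) → ℝ) →L[ℝ] ℝ,
      HasFDerivAt (fun y => Phi n y k) D x ∧ ∀ v, D v = dPhi n x v k := fun k => phi_hasDeriv n x k
  choose D hD hDv using hfam
  have hPi : HasFDerivAt (Phi n) (ContinuousLinearMap.pi D) x := hasFDerivAt_pi.2 hD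
  rw [hPi.fderiv]
  simpa using hDv k v

theorem gram : ∀ (n : ℕ), 1 ≤ n → ∀ (x u v : Fin (n+1) → ℝ),
    ∑ k, dPhi n x u k * dPhi n x v k
      = (2 * ((n:ℝ)+1)/n) * (∑ l, x l ^ 2) * (∑ l, u l * v l)
        + (2 * ((n:ℝ)-1)/n) * (∑ l, x l * u l) * (∑ l, x l * v l)
  | 0, h, _, _, _ => absurd h (by omega)
  | 1, _, x, u, v => by
    have h2 : mdim 1 = 2 := rfl
    rw [show (∑ k : Fin (mdim 1), dPhi 1 x u k * dPhi 1 x v k)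
        = ∑ k : Fin 2, dPhi 1 x u k * dPhi 1 x v k from rfl]
    simp [dPhi, Fin.sum_univ_two]
    ring
  | (n+2), _, x, u, v => by
    have hB := aCoef_pos (n+1) (by omega)
    have hA2 : aCoef (n+2) ^ 2 = (2*((n:ℝ)+2)+2)/((n:ℝ)+2) := by
      rw [aCoef_sq (n+2) (by omega)]; push_cast; ring_nf
    have hB2 : aCoef (n+1) ^ 2 = (2*((n:ℝ)+1)+2)/((n:ℝ)+1) := by
      rw [aCoef_sq (n+1) (by omega)]; push_cast; ring_nf
    have e1 : ∀ (w : Fin (n+3) → ℝ) (k : Fin (mdim (n+1))) (hk : (k:ℕ) < mdim (n+2)),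
        dPhi (n+2) x w ⟨k, hk⟩ = (aCoef (n+2)/aCoef (n+1)) *
          dPhi (n+1) (fun j => x j.castSucc) (fun j => w j.castSucc) k := by
      intro w k hk; simp [dPhi, k.isLt]
    have e2 : ∀ (w : Fin (n+3) → ℝ) (t : Fin (n+2)) (ht : mdim (n+1) + (t:ℕ) < mdim (n+2)),
        dPhi (n+2) x w ⟨mdim (n+1) + t, ht⟩
          = aCoef (n+2) * (w t.castSucc * x (Fin.last (n+2)) + x t.castSucc * w (Fin.last (n+2))) := by
      intro w t ht
      have hc1 : ¬ (mdim (n+1) + (t:ℕ) < mdim (n+1)) := by omega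
      have hc2 : mdim (n+1) + (t:ℕ) < mdim (n+1) + (n+2) := by omega
      simp [dPhi, hc1, hc2]
      exact Or.inl rfl
    have e3 : ∀ (w : Fin (n+3) → ℝ) (ht : mdim (n+1) + (n+2) < mdim (n+2)),
        dPhi (n+2) x w ⟨mdim (n+1) + (n+2), ht⟩
          = (2/((n:ℝ)+2)) * ((∑ t : Fin (n+2), x t.castSucc * w t.castSucc)
              - ((n:ℝ)+2) * (x (Fin.last (n+2)) * w (Fin.last (n+2)))) := by
      intro w ht
      have hc1 : ¬ (mdim (n+1) + (n+2) < mdim (n+1)) := by omega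
      have hc2 : ¬ (mdim (n+1) + (n+2) < mdim (n+1) + (n+2)) := by omega
      simp [dPhi, hc1, hc2]
    rw [sum_fin_split (mdim_two n) (fun k => dPhi (n+2) x u k * dPhi (n+2) x v k)]
    simp only [e1, e2, e3]
    have hApart : ∑ k : Fin (mdim (n+1)),
        ((aCoef (n+2)/aCoef (n+1)) * dPhi (n+1) (fun j => x j.castSucc) (fun j => u j.castSucc) k)
          * ((aCoef (n+2)/aCoef (n+1)) * dPhi (n+1) (fun j => x j.castSucc) (fun j => v j.castSucc) k)
        = (aCoef (n+2)/aCoef (n+1))^2 * ∑ k : Fin (mdim (n+1)),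
            dPhi (n+1) (fun j => x j.castSucc) (fun j => u j.castSucc) k
              * dPhi (n+1) (fun j => x j.castSucc) (fun j => v j.castSucc) k := by
      rw [Finset.mul_sum]; exact Finset.sum_congr rfl fun _ _ => by ring
    rw [hApart, gram (n+1) (by omega) (fun j => x j.castSucc) (fun j => u j.castSucc)
      (fun j => v j.castSucc)]
    have hBpart : ∑ t : Fin (n+2),
        (aCoef (n+2) * (u t.castSucc * x (Fin.last (n+2)) + x t.castSucc * u (Fin.last (n+2))))
          * (aCoef (n+2) * (v t.castSucc * x (Fin.last (n+2)) + x t.castSucc * v (Fin.last (n+2))))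
        = aCoef (n+2)^2 * ((x (Fin.last (n+2)) * x (Fin.last (n+2)))
              * ∑ t : Fin (n+2), u t.castSucc * v t.castSucc
            + ((x (Fin.last (n+2)) * v (Fin.last (n+2)))
              * ∑ t : Fin (n+2), x t.castSucc * u t.castSucc
            + ((x (Fin.last (n+2)) * u (Fin.last (n+2)))
              * ∑ t : Fin (n+2), x t.castSucc * v t.castSucc
            + (u (Fin.last (n+2)) * v (Fin.last (n+2)))
              * ∑ t : Fin (n+2), x t.castSucc ^ 2))) := by
      simp only [Finset.mul_sum, ← Finset.sum_add_distrib]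
      exact Finset.sum_congr rfl fun _ _ => by ring
    rw [hBpart]
    rw [show (∑ l : Fin (n+3), x l ^ 2)
        = (∑ t : Fin (n+2), x t.castSucc ^ 2) + x (Fin.last (n+2)) ^ 2 from
      Fin.sum_univ_castSucc _]
    rw [show (∑ l : Fin (n+3), u l * v l)
        = (∑ t : Fin (n+2), u t.castSucc * v t.castSucc)
          + u (Fin.last (n+2)) * v (Fin.last (n+2)) from Fin.sum_univ_castSucc _]
    rw [show (∑ l : Fin (n+3), x l * u l)
        = (∑ t : Fin (n+2), x t.castSucc * u t.castSucc)
          + x (Fin.last (n+2)) * u (Fin.last (n+2)) from Fin.sum_univ_castSucc _]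
    rw [show (∑ l : Fin (n+3), x l * v l)
        = (∑ t : Fin (n+2), x t.castSucc * v t.castSucc)
          + x (Fin.last (n+2)) * v (Fin.last (n+2)) from Fin.sum_univ_castSucc _]
    rw [div_pow, hA2, hB2]
    have c1 : ((n:ℝ)+1) ≠ 0 := by positivity
    have c2 : ((n:ℝ)+2) ≠ 0 := by positivity
    field_simp
    push_cast
    ring

lemma single_dot {m : ℕ} (i j : Fin m) :
    ∑ l, (Pi.single i 1 : Fin m → ℝ) l * (Pi.single j 1 : Fin m → ℝ) l
      = if i = j then 1 else 0 := by
  rcases eq_or_ne i j with rfl | hij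
  · simp [Pi.single_apply]
  · rw [if_neg hij]
    apply Finset.sum_eq_zero
    intro l _
    simp only [Pi.single_apply]
    rcases eq_or_ne l i with rfl | h
    · simp [hij]
    · simp [h]

lemma x_dot_single {m : ℕ} (x : Fin m → ℝ) (i : Fin m) :
    ∑ l, x l * (Pi.single i 1 : Fin m → ℝ) l = x i := by
  simp [Pi.single_apply]

/-- `(DΦ_n(x))ᵀ DΦ_n(x) = (2(n+1)/n)|x|² I + (2(n−1)/n) x xᵀ` entrywise:
the `(i,j)` entry of `(DΦ_n)ᵀ DΦ_n` is `∑_k ∂_i (Φ_n)_k ∂_j (Φ_n)_k`. -/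
theorem veronese_jacobian_gram (n : ℕ) (hn : 1 ≤ n) (x : Fin (n + 1) → ℝ)
    (i j : Fin (n + 1)) :
    ∑ k, fderiv ℝ (Phi n) x (Pi.single i 1) k * fderiv ℝ (Phi n) x (Pi.single j 1) k
      = (2 * ((n : ℝ) + 1) / n) * (∑ l, x l ^ 2) * (if i = j then 1 else 0)
        + (2 * ((n : ℝ) - 1) / n) * (x i * x j) := by
  simp only [fderiv_phi]
  rw [gram n hn x (Pi.single i 1) (Pi.single j 1), single_dot, x_dot_single, x_dot_single]
  ring
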